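/- Let a, c, q, r be real numbers with q ≥ 0 and r > 0, assume (c ≠ 0 or |a| < 1) and (q > 0 or |a| < 1), and let Σ∞ ≥ 0 be the unique nonnegative stabilizing solution of the PO-SS algebraic Riccati equation. Then for every initial condition Σ_1 ≥ 0 of the PO-SS difference Riccati recursion, the entropy rate exists and equals (1/n)·Σ_{t=1}^{n} (1/2)·log(2·π·e·[c²·Σ_t + r]) → (1/2)·log(2·π·e·[c²·Σ∞ + r]) as n → ∞. -/

import Mathlib

/-- with `Σ∞` the unique nonnegative stabilizing solution of the PO-SS
algebraic Riccati equation, along any solution of the PO-SS difference Riccati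
recursion with nonnegative initial condition, the entropy rate exists and equals
`(1/2)·log(2πe·(c²Σ∞ + r))`. -/
theorem stmt_13 (a c q r Sinf : ℝ) (hq : 0 ≤ q) (hr : 0 < r)
    (hdet : c ≠ 0 ∨ |a| < 1) (hstab : 0 < q ∨ |a| < 1)
    (hSinf : 0 ≤ Sinf)
    (hARE : Sinf = a ^ 2 * Sinf + q - (a * c * Sinf) ^ 2 / (r + c ^ 2 * Sinf))
    (hstabS : |a| * r / (r + c ^ 2 * Sinf) < 1)
    (huniq : ∀ S' : ℝ, 0 ≤ S' →
      S' = a ^ 2 * S' + q - (a * c * S') ^ 2 / (r + c ^ 2 * S') →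
      |a| * r / (r + c ^ 2 * S') < 1 → S' = Sinf)
    (Sig : ℕ → ℝ) (h0 : 0 ≤ Sig 0)
    (hrec : ∀ t, Sig (t + 1) =
      a ^ 2 * Sig t + q - (a * c * Sig t) ^ 2 / (r + c ^ 2 * Sig t)) :
    Filter.Tendsto
      (fun n : ℕ => (1 / (n : ℝ)) * ∑ t ∈ Finset.range n,
        (1 / 2) * Real.log (2 * Real.pi * Real.exp 1 * (c ^ 2 * Sig t + r)))
      Filter.atTop
      (nhds ((1 / 2) * Real.log (2 * Real.pi * Real.exp 1 * (c ^ 2 * Sinf + r)))) := by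
  have hDs : 0 < r + c ^ 2 * Sinf := by positivity
  -- the contraction constant
  set K : ℝ := a ^ 2 * r / (r + c ^ 2 * Sinf) with hK
  have hK0 : 0 ≤ K := by positivity
  have hK1 : K < 1 := by
    rw [hK, div_lt_one hDs]
    rcases hstab with hqpos | ha1
    · -- Sinf > 0
      have hSpos : 0 < Sinf := by
        rcases lt_or_eq_of_le hSinf with h | h
        · exact h
        · exfalso
          rw [← h] at hARE
          simp at hARE
          nlinarith
      -- from ARE: a^2*r*Sinf = (Sinf - q)*(r + c^2*Sinf)
      have key : a ^ 2 * r * Sinf = (Sinf - q) * (r + c ^ 2 * Sinf) := by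
        have := hARE
        field_simp at this
        nlinarith [this]
      nlinarith [mul_pos hqpos hDs]
    · have : a ^ 2 < 1 := by
        have := abs_nonneg a
        nlinarith [sq_abs a]
      nlinarith [sq_nonneg c, mul_nonneg (sq_nonneg c) hSinf]
  -- nonnegativity of the iterates
  have hpos : ∀ t, 0 ≤ Sig t := by
    intro t
    induction t with
    | zero => exact h0
    | succ n ih =>
      rw [hrec n]
      have hD : 0 < r + c ^ 2 * Sig n :=
        add_pos_of_pos_of_nonneg hr (mul_nonneg (sq_nonneg c) ih)
      have : a ^ 2 * Sig n + q - (a * c * Sig n) ^ 2 / (r + c ^ 2 * Sig n)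
          = q + a ^ 2 * r * Sig n / (r + c ^ 2 * Sig n) := by
        field_simp
        ring
      rw [this]
      positivity
  -- contraction estimate
  have hcontr : ∀ t, |Sig (t + 1) - Sinf| ≤ K * |Sig t - Sinf| := by
    intro t
    have hD : 0 < r + c ^ 2 * Sig t :=
      add_pos_of_pos_of_nonneg hr (mul_nonneg (sq_nonneg c) (hpos t))
    have heq : Sig (t + 1) - Sinf
        = (a ^ 2 * r ^ 2 / ((r + c ^ 2 * Sig t) * (r + c ^ 2 * Sinf))) * (Sig t - Sinf) := by
      rw [hrec t]
      nth_rewrite 1 [hARE]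
      rw [div_mul_eq_mul_div, eq_div_iff (mul_ne_zero hD.ne' hDs.ne')]
      linear_combination (-(r + c ^ 2 * Sinf)) * div_mul_cancel₀ ((a * c * Sig t) ^ 2) hD.ne'
        + (r + c ^ 2 * Sig t) * div_mul_cancel₀ ((a * c * Sinf) ^ 2) hDs.ne'
    rw [heq, abs_mul]
    have h1 : |a ^ 2 * r ^ 2 / ((r + c ^ 2 * Sig t) * (r + c ^ 2 * Sinf))|
        = a ^ 2 * r ^ 2 / ((r + c ^ 2 * Sig t) * (r + c ^ 2 * Sinf)) := by
      rw [abs_of_nonneg]; positivity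
    rw [h1]
    apply mul_le_mul_of_nonneg_right _ (abs_nonneg _)
    rw [hK, div_le_div_iff₀ (by positivity) hDs]
    have hle : r ≤ r + c ^ 2 * Sig t := by nlinarith [mul_nonneg (sq_nonneg c) (hpos t)]
    nlinarith [mul_le_mul_of_nonneg_right
      (mul_le_mul_of_nonneg_left hle (by positivity : (0:ℝ) ≤ a ^ 2 * r)) hDs.le]
  -- geometric bound
  have hgeom : ∀ t, |Sig t - Sinf| ≤ K ^ t * |Sig 0 - Sinf| := by
    intro t
    induction t with
    | zero => simp
    | succ n ih =>
      calc |Sig (n + 1) - Sinf| ≤ K * |Sig n - Sinf| := hcontr n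
        _ ≤ K * (K ^ n * |Sig 0 - Sinf|) := by
            exact mul_le_mul_of_nonneg_left ih hK0
        _ = K ^ (n + 1) * |Sig 0 - Sinf| := by ring
  -- Sig → Sinf
  have hlim : Filter.Tendsto Sig Filter.atTop (nhds Sinf) := by
    rw [← tendsto_sub_nhds_zero_iff]
    apply squeeze_zero_norm (fun t => hgeom t)
    have : Filter.Tendsto (fun t : ℕ => K ^ t * |Sig 0 - Sinf|) Filter.atTop (nhds (0 * |Sig 0 - Sinf|)) :=
      (tendsto_pow_atTop_nhds_zero_of_lt_one hK0 hK1).mul_const _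
    simpa using this
  -- entropy terms converge
  have hcont : Filter.Tendsto
      (fun t : ℕ => (1 / 2) * Real.log (2 * Real.pi * Real.exp 1 * (c ^ 2 * Sig t + r)))
      Filter.atTop
      (nhds ((1 / 2) * Real.log (2 * Real.pi * Real.exp 1 * (c ^ 2 * Sinf + r)))) := by
    have harg : Filter.Tendsto
        (fun t : ℕ => 2 * Real.pi * Real.exp 1 * (c ^ 2 * Sig t + r)) Filter.atTop
        (nhds (2 * Real.pi * Real.exp 1 * (c ^ 2 * Sinf + r))) := by
      apply Filter.Tendsto.const_mul
      exact ((hlim.const_mul _).add_const r)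
    have hne : 2 * Real.pi * Real.exp 1 * (c ^ 2 * Sinf + r) ≠ 0 := by
      have : 0 < 2 * Real.pi * Real.exp 1 * (c ^ 2 * Sinf + r) := by positivity
      exact this.ne'
    exact ((Real.continuousAt_log hne).tendsto.comp harg).const_mul _
  have := hcont.cesaro
  simpa [one_div] using this
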